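/- For every n ≥ 0 and every k ≥ 0, the number of (a-bc)-avoiding permutations of [n] having exactly k left-to-right minima equals S(n,k), the number of set partitions of [n] into exactly k blocks. -/

import Mathlib

/-- `π` avoids the pattern (a-bc): there are no (0-based) indices `i < j` with
`j + 1 < n` and `π i < π j < π (j+1)`. -/
def AvoidsAdBC (n : ℕ) (π : Equiv.Perm (Fin n)) : Prop :=
  ∀ (i j : ℕ) (hi : i < n) (hj : j + 1 < n), i < j →
    ¬ (π ⟨i, hi⟩ < π ⟨j, Nat.lt_of_succ_lt hj⟩ ∧
       π ⟨j, Nat.lt_of_succ_lt hj⟩ < π ⟨j + 1, hj⟩)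

/-- The number of left-to-right minima of `π`:
indices `i` such that `π i < π j` for all `j < i`. -/
noncomputable def ltrMin (n : ℕ) (π : Equiv.Perm (Fin n)) : ℕ :=
  {i : Fin n | ∀ j : Fin n, j < i → π i < π j}.ncard

/-- `P` is a set partition of `{1, …, n}` (realised as `Fin n`). -/
def IsSetPartition (n : ℕ) (P : Finset (Finset (Fin n))) : Prop :=
  (∀ A ∈ P, A.Nonempty) ∧
  (∀ A ∈ P, ∀ B ∈ P, A ≠ B → Disjoint A B) ∧
  (∀ x : Fin n, ∃ A ∈ P, x ∈ A)

namespace AdBC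
open Finset
attribute [local instance] Classical.propDecidable

variable {n : ℕ}

def IsMin (π : Equiv.Perm (Fin n)) (i : Fin n) : Prop := ∀ j, j < i → π i < π j

noncomputable def minSet (π : Equiv.Perm (Fin n)) : Finset (Fin n) := univ.filter (IsMin π)

noncomputable def lead (π : Equiv.Perm (Fin n)) (i : Fin n) : Fin n :=
  (univ.filter fun p => p ≤ i ∧ IsMin π p).max' (by
    refine ⟨⟨0, Nat.lt_of_le_of_lt (Nat.zero_le _) i.2⟩, ?_⟩
    simp only [mem_filter, mem_univ, true_and]
    exact ⟨by simp [Fin.le_def], fun j hj => absurd hj (by simp [Fin.lt_def])⟩)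

variable {π : Equiv.Perm (Fin n)} {i j p : Fin n}

lemma lead_spec : lead π i ≤ i ∧ IsMin π (lead π i) := by
  have := Finset.max'_mem (univ.filter fun p => p ≤ i ∧ IsMin π p)
    (by
      refine ⟨⟨0, Nat.lt_of_le_of_lt (Nat.zero_le _) i.2⟩, ?_⟩
      simp only [mem_filter, mem_univ, true_and]
      exact ⟨by simp [Fin.le_def], fun j hj => absurd hj (by simp [Fin.lt_def])⟩)
  simp only [mem_filter, mem_univ, true_and] at this
  exact this

lemma lead_le (π : Equiv.Perm (Fin n)) (i : Fin n) : lead π i ≤ i := lead_spec.1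

lemma isMin_lead (π : Equiv.Perm (Fin n)) (i : Fin n) : IsMin π (lead π i) := lead_spec.2

lemma le_lead (hp : IsMin π p) (h : p ≤ i) : p ≤ lead π i := by
  apply Finset.le_max'
  simp only [mem_filter, mem_univ, true_and]
  exact ⟨h, hp⟩

lemma lead_of_isMin (h : IsMin π i) : lead π i = i :=
  le_antisymm (lead_le π i) (le_lead h le_rfl)

lemma lead_mono (h : i ≤ j) : lead π i ≤ lead π j :=
  le_lead (isMin_lead π i) ((lead_le π i).trans h)

lemma lt_lead_iff : j < lead π i ↔ lead π j < lead π i := by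
  constructor
  · intro h
    exact lt_of_le_of_lt (lead_le π j) h
  · intro h
    by_contra hc
    push_neg at hc
    have : lead π i ≤ lead π j := by
      have h1 : lead π (lead π i) = lead π i := lead_of_isMin (isMin_lead π i)
      calc lead π i = lead π (lead π i) := h1.symm
        _ ≤ lead π j := lead_mono hc
    exact absurd h (not_lt.mpr this)

noncomputable def Lv (π : Equiv.Perm (Fin n)) (v : Fin n) : Fin n := lead π (π.symm v)

noncomputable def fib (π : Equiv.Perm (Fin n)) (v : Fin n) : Finset (Fin n) :=
  univ.filter fun w => Lv π w = Lv π v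

noncomputable def fMap (π : Equiv.Perm (Fin n)) : Finset (Finset (Fin n)) :=
  univ.image (fib π)

noncomputable def blockOf (P : Finset (Finset (Fin n))) (v : Fin n) : Finset (Fin n) :=
  univ.filter fun y => ∃ A ∈ P, v ∈ A ∧ y ∈ A

noncomputable def minOf (P : Finset (Finset (Fin n))) (v : Fin n) : Fin n :=
  if h : (blockOf P v).Nonempty then (blockOf P v).min' h else v

noncomputable def offs (P : Finset (Finset (Fin n))) (v : Fin n) : ℕ :=
  if v = minOf P v then 0 else ((blockOf P v).filter fun y => v ≤ y).card

noncomputable def bigger (P : Finset (Finset (Fin n))) (v : Fin n) : Finset (Fin n) :=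
  univ.filter fun w => minOf P v < minOf P w

noncomputable def pos (P : Finset (Finset (Fin n))) (v : Fin n) : ℕ :=
  (bigger P v).card + offs P v

section Partition

variable {P : Finset (Finset (Fin n))} {v w y : Fin n} {A : Finset (Fin n)}

lemma blockOf_eq (hP : IsSetPartition n P) (hA : A ∈ P) (hv : v ∈ A) : blockOf P v = A := by
  ext y
  simp only [blockOf, mem_filter, mem_univ, true_and]
  constructor
  · rintro ⟨B, hB, hvB, hyB⟩
    rcases eq_or_ne B A with rfl | hne
    · exact hyB
    · exact absurd (hP.2.1 B hB A hA hne) (fun hd => (Finset.disjoint_left.mp hd hvB) hv)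
  · intro hy
    exact ⟨A, hA, hv, hy⟩

lemma mem_blockOf_self (hP : IsSetPartition n P) (v : Fin n) : v ∈ blockOf P v := by
  obtain ⟨A, hA, hv⟩ := hP.2.2 v
  rw [blockOf_eq hP hA hv]; exact hv

lemma blockOf_nonempty (hP : IsSetPartition n P) (v : Fin n) : (blockOf P v).Nonempty :=
  ⟨v, mem_blockOf_self hP v⟩

lemma blockOf_mem (hP : IsSetPartition n P) (v : Fin n) : blockOf P v ∈ P := by
  obtain ⟨A, hA, hv⟩ := hP.2.2 v
  rw [blockOf_eq hP hA hv]; exact hA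

lemma minOf_def' (hP : IsSetPartition n P) (v : Fin n) :
    minOf P v = (blockOf P v).min' (blockOf_nonempty hP v) := dif_pos _

lemma minOf_mem (hP : IsSetPartition n P) (v : Fin n) : minOf P v ∈ blockOf P v := by
  rw [minOf_def' hP]; exact Finset.min'_mem _ _

lemma minOf_le (hP : IsSetPartition n P) (hy : y ∈ blockOf P v) : minOf P v ≤ y := by
  rw [minOf_def' hP]; exact Finset.min'_le _ _ hy

lemma blockOf_eq_of_mem (hP : IsSetPartition n P) (hw : w ∈ blockOf P v) :
    blockOf P w = blockOf P v :=
  blockOf_eq hP (blockOf_mem hP v) hw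

lemma minOf_eq_of_mem (hP : IsSetPartition n P) (hw : w ∈ blockOf P v) :
    minOf P w = minOf P v := by
  have h := blockOf_eq_of_mem hP hw
  rw [minOf_def' hP, minOf_def' hP]
  apply le_antisymm
  · apply Finset.min'_le
    rw [h]
    exact Finset.min'_mem _ _
  · apply Finset.min'_le
    rw [← h]
    exact Finset.min'_mem _ _

lemma sameMin_iff (hP : IsSetPartition n P) :
    minOf P w = minOf P v ↔ w ∈ blockOf P v := by
  constructor
  · intro h
    have h1 : minOf P w ∈ blockOf P w := minOf_mem hP w
    have h2 : minOf P v ∈ blockOf P v := minOf_mem hP v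
    rw [h] at h1
    have : blockOf P w = blockOf P v := by
      rcases eq_or_ne (blockOf P w) (blockOf P v) with he | hne
      · exact he
      · exact absurd (hP.2.1 _ (blockOf_mem hP w) _ (blockOf_mem hP v) hne)
          (fun hd => (Finset.disjoint_left.mp hd h1) h2)
    rw [← this]; exact mem_blockOf_self hP w
  · exact minOf_eq_of_mem hP

lemma minOf_minOf (hP : IsSetPartition n P) (v : Fin n) :
    minOf P (minOf P v) = minOf P v :=
  minOf_eq_of_mem hP (minOf_mem hP v)

lemma minOf_lt_of_ne (hP : IsSetPartition n P) (hy : y ∈ blockOf P v) (hne : y ≠ minOf P v) :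
    minOf P v < y :=
  lt_of_le_of_ne (minOf_le hP hy) (fun h => hne h.symm)

lemma bigger_eq_of_min_eq (h : minOf P w = minOf P v) : bigger P w = bigger P v := by
  simp only [bigger, h]

lemma bigger_card_ge (hP : IsSetPartition n P) (h : minOf P v < minOf P w) :
    (bigger P w).card + (blockOf P w).card ≤ (bigger P v).card := by
  have hdisj : Disjoint (bigger P w) (blockOf P w) := by
    rw [Finset.disjoint_left]
    intro u hu hu'
    simp only [bigger, mem_filter, mem_univ, true_and] at hu
    rw [minOf_eq_of_mem hP hu'] at hu
    exact lt_irrefl _ hu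
  have hsub : bigger P w ∪ blockOf P w ⊆ bigger P v := by
    intro u hu
    simp only [bigger, mem_filter, mem_univ, true_and]
    rcases Finset.mem_union.mp hu with hu | hu
    · simp only [bigger, mem_filter, mem_univ, true_and] at hu
      exact h.trans hu
    · rw [minOf_eq_of_mem hP hu]; exact h
  calc (bigger P w).card + (blockOf P w).card = (bigger P w ∪ blockOf P w).card :=
        (Finset.card_union_of_disjoint hdisj).symm
    _ ≤ (bigger P v).card := Finset.card_le_card hsub

lemma offs_lt_card (hP : IsSetPartition n P) (v : Fin n) : offs P v < (blockOf P v).card := by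
  unfold offs
  split_ifs with h
  · exact Finset.card_pos.mpr (blockOf_nonempty hP v)
  · apply Finset.card_lt_card
    constructor
    · exact Finset.filter_subset _ _
    · intro hsub
      have hm := minOf_mem hP v
      have := hsub hm
      simp only [mem_filter] at this
      have hlt : minOf P v < v := minOf_lt_of_ne hP (mem_blockOf_self hP v) h
      exact absurd this.2 (not_le.mpr hlt)

lemma pos_lt_pos (hP : IsSetPartition n P) (h : minOf P v < minOf P w) :
    pos P w < pos P v := by
  have h1 := bigger_card_ge hP h
  have h2 := offs_lt_card hP w
  unfold pos
  omega

lemma pos_lt_n (hP : IsSetPartition n P) (v : Fin n) : pos P v < n := by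
  have hdisj : Disjoint (bigger P v) (blockOf P v) := by
    rw [Finset.disjoint_left]
    intro u hu hu'
    simp only [bigger, mem_filter, mem_univ, true_and] at hu
    rw [minOf_eq_of_mem hP hu'] at hu
    exact lt_irrefl _ hu
  have h1 : (bigger P v).card + (blockOf P v).card ≤ n := by
    calc (bigger P v).card + (blockOf P v).card = (bigger P v ∪ blockOf P v).card :=
          (Finset.card_union_of_disjoint hdisj).symm
      _ ≤ (univ : Finset (Fin n)).card := Finset.card_le_card (Finset.subset_univ _)
      _ = n := Finset.card_univ.trans (Fintype.card_fin n)
  have h2 := offs_lt_card hP v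
  unfold pos
  omega

lemma offs_inj (hP : IsSetPartition n P) (hw : w ∈ blockOf P v) (h : offs P w = offs P v) :
    w = v := by
  have hbeq : blockOf P w = blockOf P v := blockOf_eq_of_mem hP hw
  have hmeq : minOf P w = minOf P v := minOf_eq_of_mem hP hw
  unfold offs at h
  by_cases h1 : w = minOf P w <;> by_cases h2 : v = minOf P v
  · rw [h1, h2, hmeq]
  · rw [if_pos h1, if_neg h2] at h
    exfalso
    have : v ∈ (blockOf P v).filter fun y => v ≤ y := by
      simp only [mem_filter]
      exact ⟨mem_blockOf_self hP v, le_refl v⟩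
    have := Finset.card_pos.mpr ⟨v, this⟩
    omega
  · rw [if_neg h1, if_pos h2] at h
    exfalso
    have : w ∈ (blockOf P w).filter fun y => w ≤ y := by
      simp only [mem_filter]
      exact ⟨mem_blockOf_self hP w, le_refl w⟩
    have := Finset.card_pos.mpr ⟨w, this⟩
    omega
  · rw [if_neg h1, if_neg h2] at h
    rcases lt_trichotomy w v with hlt | he | hlt
    · exfalso
      have hsub : (blockOf P v).filter (fun y => v ≤ y) ⊂ (blockOf P w).filter (fun y => w ≤ y) := by
        constructor
        · intro y hy
          simp only [mem_filter] at hy ⊢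
          rw [hbeq]
          exact ⟨hy.1, le_of_lt (lt_of_lt_of_le hlt hy.2)⟩
        · intro hsub'
          have : w ∈ (blockOf P w).filter fun y => w ≤ y := by
            simp only [mem_filter]
            exact ⟨mem_blockOf_self hP w, le_refl w⟩
          have hw2 := hsub' this
          simp only [mem_filter] at hw2
          exact absurd hw2.2 (not_le.mpr hlt)
      have := Finset.card_lt_card hsub
      omega
    · exact he
    · exfalso
      have hsub : (blockOf P w).filter (fun y => w ≤ y) ⊂ (blockOf P v).filter (fun y => v ≤ y) := by
        constructor
        · intro y hy
          simp only [mem_filter] at hy ⊢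
          rw [hbeq] at hy
          exact ⟨hy.1, le_of_lt (lt_of_lt_of_le hlt hy.2)⟩
        · intro hsub'
          have : v ∈ (blockOf P v).filter fun y => v ≤ y := by
            simp only [mem_filter]
            exact ⟨mem_blockOf_self hP v, le_refl v⟩
          have hv2 := hsub' this
          simp only [mem_filter] at hv2
          exact absurd hv2.2 (not_le.mpr hlt)
      have := Finset.card_lt_card hsub
      omega

lemma pos_injective (hP : IsSetPartition n P) : Function.Injective (fun v => pos P v) := by
  intro v w h
  simp only at h
  rcases lt_trichotomy (minOf P v) (minOf P w) with hlt | he | hlt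
  · exact absurd h (ne_of_lt (pos_lt_pos hP hlt)).symm
  · have hv : v ∈ blockOf P w := (sameMin_iff hP).mp he
    have hbig : bigger P v = bigger P w := bigger_eq_of_min_eq he
    unfold pos at h
    rw [hbig] at h
    have : offs P v = offs P w := by omega
    exact offs_inj hP hv this
  · exact absurd h (ne_of_lt (pos_lt_pos hP hlt))

noncomputable def posE (hP : IsSetPartition n P) : Fin n → Fin n :=
  fun v => ⟨pos P v, pos_lt_n hP v⟩

lemma posE_injective (hP : IsSetPartition n P) : Function.Injective (posE hP) := by
  intro v w h
  exact pos_injective hP (congrArg Fin.val h)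

noncomputable def gp (hP : IsSetPartition n P) : Equiv.Perm (Fin n) :=
  (Equiv.ofBijective (posE hP) (Finite.injective_iff_bijective.mp (posE_injective hP))).symm

lemma gp_symm (hP : IsSetPartition n P) (v : Fin n) :
    (gp hP).symm v = ⟨pos P v, pos_lt_n hP v⟩ := by
  simp only [gp, Equiv.symm_symm, Equiv.ofBijective_apply, posE]

lemma pos_gp (hP : IsSetPartition n P) (j : Fin n) : pos P (gp hP j) = j.1 := by
  have := (gp hP).symm_apply_apply j
  rw [gp_symm] at this
  exact congrArg Fin.val this

end Partition

section AvoidChar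

variable {π : Equiv.Perm (Fin n)}

lemma avoids_iff : AvoidsAdBC n π ↔ ∀ (j : ℕ) (hj : j + 1 < n),
    π ⟨j, Nat.lt_of_succ_lt hj⟩ < π ⟨j + 1, hj⟩ → IsMin π ⟨j, Nat.lt_of_succ_lt hj⟩ := by
  constructor
  · intro hav j hj hasc i hi
    by_contra hc
    push_neg at hc
    have hne : π i ≠ π ⟨j, Nat.lt_of_succ_lt hj⟩ := fun h => by
      have := π.injective h
      rw [this] at hi
      exact lt_irrefl _ hi
    have hlt : π i < π ⟨j, Nat.lt_of_succ_lt hj⟩ := lt_of_le_of_ne hc hne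
    have hij : i.1 < j := hi
    have := hav i.1 j i.2 hj hij
    exact this ⟨by simpa using hlt, hasc⟩
  · intro h i j hi hj hij ⟨h1, h2⟩
    have hm := h j hj h2
    have hlt : (⟨i, hi⟩ : Fin n) < ⟨j, Nat.lt_of_succ_lt hj⟩ := hij
    exact absurd h1 (not_lt.mpr (le_of_lt (hm ⟨i, hi⟩ hlt)))

end AvoidChar

section GpProps

variable {P : Finset (Finset (Fin n))} {v w : Fin n}

lemma offs_pos_of_ne (hP : IsSetPartition n P) (hv : v ≠ minOf P v) : 1 ≤ offs P v := by
  rw [offs, if_neg hv]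
  apply Finset.card_pos.mpr
  exact ⟨v, by simp only [mem_filter]; exact ⟨mem_blockOf_self hP v, le_refl v⟩⟩

lemma pos_minOf (hP : IsSetPartition n P) (v : Fin n) :
    pos P (minOf P v) = (bigger P v).card := by
  have h1 : bigger P (minOf P v) = bigger P v := bigger_eq_of_min_eq (minOf_minOf hP v)
  have h2 : offs P (minOf P v) = 0 := if_pos (minOf_minOf hP v).symm
  rw [pos, h1, h2]
  omega

lemma pos_minOf_le (hP : IsSetPartition n P) (v : Fin n) : pos P (minOf P v) ≤ pos P v := by
  rw [pos_minOf hP]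
  exact Nat.le_add_right _ _

lemma blockmin_isMin (hP : IsSetPartition n P) (hv : v = minOf P v) :
    IsMin (gp hP) ((gp hP).symm v) := by
  intro j hj
  rw [Equiv.apply_symm_apply]
  set u := gp hP j with hu
  have hju : pos P u = j.1 := pos_gp hP j
  have hjv : j.1 < pos P v := by
    have := hj
    rw [Fin.lt_def, gp_symm hP] at this
    exact this
  have hpuv : pos P u < pos P v := by omega
  rcases lt_trichotomy (minOf P u) (minOf P v) with hlt | he | hlt
  · exact absurd (pos_lt_pos hP hlt) (not_lt.mpr (le_of_lt hpuv))
  · exfalso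
    have hbig : bigger P u = bigger P v := bigger_eq_of_min_eq he
    have hov : offs P v = 0 := if_pos hv
    have : pos P v ≤ pos P u := by
      rw [pos, pos, hbig, hov]
      omega
    omega
  · calc v = minOf P v := hv
      _ < minOf P u := hlt
      _ ≤ u := minOf_le hP (mem_blockOf_self hP u)

lemma notmin_descent (hP : IsSetPartition n P) (hv : v ≠ minOf P v)
    (hw : pos P w = pos P v + 1) : w < v := by
  rcases lt_trichotomy (minOf P w) (minOf P v) with hlt | he | hlt
  · -- w's block has smaller min
    by_cases h1 : w = minOf P w
    · calc w = minOf P w := h1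
        _ < minOf P v := hlt
        _ ≤ v := minOf_le hP (mem_blockOf_self hP v)
    · exfalso
      have hge := bigger_card_ge hP hlt
      have ho1 := offs_pos_of_ne hP h1
      have ho2 := offs_lt_card hP v
      rw [pos, pos] at hw
      omega
  · -- same block
    have hwv : w ∈ blockOf P v := (sameMin_iff hP).mp he
    have hbeq : blockOf P w = blockOf P v := blockOf_eq_of_mem hP hwv
    have hbig : bigger P w = bigger P v := bigger_eq_of_min_eq he
    have hoffs : offs P w = offs P v + 1 := by
      rw [pos, pos, hbig] at hw
      omega
    have hwm : w ≠ minOf P w := by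
      intro h1
      rw [offs, if_pos h1] at hoffs
      omega
    have hvo : offs P v = ((blockOf P v).filter fun y => v ≤ y).card := if_neg hv
    have hwo : offs P w = ((blockOf P w).filter fun y => w ≤ y).card := if_neg hwm
    by_contra hc
    push_neg at hc
    have hsub : (blockOf P w).filter (fun y => w ≤ y) ⊆ (blockOf P v).filter (fun y => v ≤ y) := by
      intro y hy
      simp only [mem_filter] at hy ⊢
      rw [hbeq] at hy
      exact ⟨hy.1, hc.trans hy.2⟩
    have := Finset.card_le_card hsub
    omega
  · exact absurd (pos_lt_pos hP hlt) (by omega)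

lemma gp_avoids (hP : IsSetPartition n P) : AvoidsAdBC n (gp hP) := by
  rw [avoids_iff]
  intro j hj hasc
  set jf : Fin n := ⟨j, Nat.lt_of_succ_lt hj⟩ with hjf
  set v := gp hP jf with hv
  set w := gp hP ⟨j + 1, hj⟩ with hw
  have hpv : pos P v = j := pos_gp hP jf
  have hpw : pos P w = j + 1 := pos_gp hP ⟨j + 1, hj⟩
  by_cases h1 : v = minOf P v
  · have := blockmin_isMin hP h1
    rwa [hv, Equiv.symm_apply_apply] at this
  · exact absurd hasc (not_lt.mpr (le_of_lt (notmin_descent hP h1 (by omega))))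

lemma gp_symm_val (hP : IsSetPartition n P) (v : Fin n) :
    ((gp hP).symm v).1 = pos P v := by rw [gp_symm hP]

lemma isMin_gp_imp (hP : IsSetPartition n P) {i : Fin n} (h : IsMin (gp hP) i) :
    gp hP i = minOf P (gp hP i) := by
  by_contra hne
  set u := gp hP i with hu
  have hpm : pos P (minOf P u) < pos P u := by
    have h1 : pos P (minOf P u) = (bigger P u).card := pos_minOf hP u
    have h2 := offs_pos_of_ne hP hne
    have h3 : pos P u = (bigger P u).card + offs P u := rfl
    omega
  have hsm : (gp hP).symm (minOf P u) < i := by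
    rw [Fin.lt_def, gp_symm_val hP]
    have h4 : pos P u = i.1 := pos_gp hP i
    omega
  have := h _ hsm
  rw [Equiv.apply_symm_apply] at this
  exact absurd this (not_lt.mpr (minOf_le hP (mem_blockOf_self hP u)))

lemma lead_le_of {π : Equiv.Perm (Fin n)} {i p : Fin n}
    (h : ∀ q, q ≤ i → IsMin π q → q ≤ p) : lead π i ≤ p := by
  apply Finset.max'_le
  intro q hq
  simp only [mem_filter, mem_univ, true_and] at hq
  exact h q hq.1 hq.2

lemma lead_gp (hP : IsSetPartition n P) (v : Fin n) :
    lead (gp hP) ((gp hP).symm v) = (gp hP).symm (minOf P v) := by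
  apply le_antisymm
  · apply lead_le_of
    intro q hq hmin
    set u := gp hP q with hu
    have hum : u = minOf P u := isMin_gp_imp hP hmin
    have hqu : pos P u = q.1 := pos_gp hP q
    have hle : pos P u ≤ pos P v := by
      have h5 : q.1 ≤ ((gp hP).symm v).1 := hq
      rw [gp_symm_val hP] at h5
      omega
    have hgoal : pos P u ≤ pos P (minOf P v) := by
      rcases lt_trichotomy (minOf P u) (minOf P v) with hlt | he | hlt
      · exact absurd (pos_lt_pos hP hlt) (by omega)
      · have : u = minOf P v := by rw [hum, he]
        rw [this]
      · have hge := bigger_card_ge hP hlt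
        have hbpos : 1 ≤ (blockOf P u).card := Finset.card_pos.mpr (blockOf_nonempty hP u)
        have h0 : offs P u = 0 := if_pos hum
        rw [pos_minOf hP, pos, h0]
        omega
    rw [Fin.le_def, gp_symm_val hP]
    omega
  · apply le_lead
    · have : minOf P (minOf P v) = minOf P v := minOf_minOf hP v
      exact blockmin_isMin hP this.symm
    · rw [Fin.le_def, gp_symm_val hP, gp_symm_val hP]
      exact pos_minOf_le hP v

lemma fib_gp (hP : IsSetPartition n P) (v : Fin n) : fib (gp hP) v = blockOf P v := by
  ext w
  rw [fib, mem_filter]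
  simp only [mem_univ, true_and, Lv]
  rw [lead_gp hP, lead_gp hP]
  constructor
  · intro h
    have : minOf P w = minOf P v := (gp hP).symm.injective h
    exact (sameMin_iff hP).mp this
  · intro h
    rw [minOf_eq_of_mem hP h]

lemma fMap_gp (hP : IsSetPartition n P) : fMap (gp hP) = P := by
  ext A
  simp only [fMap, mem_image, mem_univ, true_and]
  constructor
  · rintro ⟨v, rfl⟩
    rw [fib_gp hP]
    exact blockOf_mem hP v
  · intro hA
    obtain ⟨x, hx⟩ := hP.1 A hA
    exact ⟨x, by rw [fib_gp hP, blockOf_eq hP hA hx]⟩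

end GpProps

section General

variable {π : Equiv.Perm (Fin n)} {v w : Fin n}

lemma card_filter_symm (π : Equiv.Perm (Fin n)) (Q : Fin n → Prop) [DecidablePred Q]
    [DecidablePred fun w => Q (π.symm w)] :
    (univ.filter fun w => Q (π.symm w)).card = (univ.filter Q).card := by
  have himg : (univ.filter Q).image π = univ.filter fun w => Q (π.symm w) := by
    ext w
    simp only [mem_image, mem_filter, mem_univ, true_and]
    constructor
    · rintro ⟨u, hu, rfl⟩
      rwa [Equiv.symm_apply_apply]
    · intro h
      exact ⟨π.symm w, h, Equiv.apply_symm_apply π w⟩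
  rw [← himg, Finset.card_image_of_injective _ π.injective]

lemma pi_lead_le (π : Equiv.Perm (Fin n)) : ∀ (j : Fin n), π (lead π j) ≤ π j := by
  suffices H : ∀ N, ∀ j : Fin n, j.1 < N → π (lead π j) ≤ π j by
    exact fun j => H (j.1 + 1) j (Nat.lt_succ_self _)
  intro N
  induction N with
  | zero => intro j h; omega
  | succ N ih =>
    intro j hjN
    by_contra hc
    push_neg at hc
    have hpj : lead π j ≠ j := fun h => by rw [h] at hc; exact lt_irrefl _ hc
    have hplt : lead π j < j := lt_of_le_of_ne (lead_le π j) hpj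
    have hmin : IsMin π j := by
      intro i hi
      rcases lt_or_ge i (lead π j) with h1 | h1
      · exact lt_trans hc (isMin_lead π j i h1)
      · have hl1 : lead π j ≤ lead π i := le_lead (isMin_lead π j) h1
        have hl2 : lead π i ≤ lead π j := lead_mono (le_of_lt hi)
        have hleq : lead π i = lead π j := le_antisymm hl2 hl1
        have hiv : i.1 < j.1 := hi
        have := ih i (by omega)
        rw [hleq] at this
        exact lt_of_lt_of_le hc this
    exact hpj (lead_of_isMin hmin)

lemma mem_fib : w ∈ fib π v ↔ Lv π w = Lv π v := by
  simp [fib]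

lemma blockOf_fMap (π : Equiv.Perm (Fin n)) (v : Fin n) : blockOf (fMap π) v = fib π v := by
  ext y
  rw [blockOf, mem_filter]
  simp only [mem_univ, true_and]
  rw [mem_fib]
  constructor
  · rintro ⟨A, hA, hv, hy⟩
    rw [fMap, mem_image] at hA
    obtain ⟨u, -, rfl⟩ := hA
    rw [mem_fib] at hv hy
    rw [hy, ← hv]
  · intro h
    refine ⟨fib π v, ?_, mem_fib.mpr rfl, mem_fib.mpr h⟩
    rw [fMap, mem_image]
    exact ⟨v, mem_univ v, rfl⟩

lemma Lv_pi (π : Equiv.Perm (Fin n)) (p : Fin n) : Lv π (π p) = lead π p := by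
  rw [Lv, Equiv.symm_apply_apply]

lemma minOf_fMap (π : Equiv.Perm (Fin n)) (v : Fin n) :
    minOf (fMap π) v = π (Lv π v) := by
  have hne : (blockOf (fMap π) v).Nonempty := by
    rw [blockOf_fMap]
    exact ⟨v, mem_fib.mpr rfl⟩
  rw [minOf, dif_pos hne]
  apply le_antisymm
  · apply Finset.min'_le
    rw [blockOf_fMap, mem_fib, Lv_pi]
    exact lead_of_isMin (isMin_lead π _)
  · apply Finset.le_min'
    intro y hy
    rw [blockOf_fMap, mem_fib] at hy
    have h1 : π (lead π (π.symm y)) ≤ π (π.symm y) := pi_lead_le π (π.symm y)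
    rw [Equiv.apply_symm_apply] at h1
    have h2 : lead π (π.symm y) = Lv π v := hy
    rwa [h2] at h1

lemma mins_lt_iff {p q : Fin n} (hp : IsMin π p) (hq : IsMin π q) : π p < π q ↔ q < p := by
  constructor
  · intro h
    rcases lt_trichotomy q p with h1 | rfl | h1
    · exact h1
    · exact absurd h (lt_irrefl _)
    · exact absurd (hq p h1) (not_lt.mpr (le_of_lt h))
  · exact hp q

lemma card_bigger_fMap (π : Equiv.Perm (Fin n)) (v : Fin n) :
    (bigger (fMap π) v).card = (Lv π v).1 := by
  have h1 : bigger (fMap π) v = univ.filter fun w => π.symm w < Lv π v := by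
    ext w
    simp only [bigger, mem_filter, mem_univ, true_and]
    rw [minOf_fMap, minOf_fMap]
    have hp : IsMin π (Lv π v) := isMin_lead π _
    have hq : IsMin π (Lv π w) := isMin_lead π _
    rw [mins_lt_iff hp hq]
    exact lt_lead_iff.symm
  rw [h1, card_filter_symm π (fun u => u < Lv π v)]
  have h2 : (univ.filter fun u : Fin n => u < Lv π v) = Finset.Iio (Lv π v) := by
    ext u; simp
  rw [h2, Fin.card_Iio]

lemma desc (hav : AvoidsAdBC n π) :
    ∀ (b a : Fin n), lead π b < a → a < b → π b < π a := by
  have hchar := avoids_iff.mp hav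
  suffices H : ∀ N, ∀ b a : Fin n, b.1 < N → lead π b < a → a < b → π b < π a by
    exact fun b a h1 h2 => H (b.1 + 1) b a (Nat.lt_succ_self _) h1 h2
  intro N
  induction N with
  | zero => intro b a h; omega
  | succ N ih =>
    intro b a hbN hla hab
    have habv : a.1 < b.1 := hab
    have hb1 : 1 ≤ b.1 := by omega
    set c : Fin n := ⟨b.1 - 1, by omega⟩ with hc
    have hcb : c < b := by
      rw [Fin.lt_def]
      show b.1 - 1 < b.1
      omega
    have hcb1 : c.1 + 1 = b.1 := by
      show b.1 - 1 + 1 = b.1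
      omega
    have hac : a ≤ c := by
      rw [Fin.le_def]
      show a.1 ≤ b.1 - 1
      omega
    have hstep : π b < π c := by
      by_contra hcon
      push_neg at hcon
      have hne : π c ≠ π b := fun h => (ne_of_lt hcb) (π.injective h)
      have hasc : π c < π b := lt_of_le_of_ne hcon hne
      have hj : c.1 + 1 < n := by rw [hcb1]; exact b.2
      have hbeq : (⟨c.1 + 1, hj⟩ : Fin n) = b := Fin.ext hcb1
      have hceq : (⟨c.1, Nat.lt_of_succ_lt hj⟩ : Fin n) = c := Fin.ext rfl
      have hmin := hchar c.1 hj (by rw [hbeq, hceq]; exact hasc)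
      rw [hceq] at hmin
      have h1 : c = lead π c := (lead_of_isMin hmin).symm
      have h2 : lead π c ≤ lead π b := lead_mono (le_of_lt hcb)
      have h3 : lead π b < c := lt_of_lt_of_le hla hac
      rw [← h1] at h2
      exact absurd h3 (not_lt.mpr h2)
    rcases eq_or_lt_of_le hac with heq | hlt
    · rw [heq]; exact hstep
    · have h4 : lead π c < a := lt_of_le_of_lt (lead_mono (le_of_lt hcb)) hla
      have h5 := ih c a (by omega) h4 hlt
      exact lt_trans hstep h5

lemma pos_fMap (hav : AvoidsAdBC n π) (v : Fin n) : pos (fMap π) v = (π.symm v).1 := by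
  set j := π.symm v with hjdef
  have hvj : π j = v := Equiv.apply_symm_apply π v
  have hLv : Lv π v = lead π j := rfl
  have hbig : (bigger (fMap π) v).card = (lead π j).1 := by
    rw [card_bigger_fMap, hLv]
  by_cases hcase : lead π j = j
  · have hvmin : v = minOf (fMap π) v := by
      rw [minOf_fMap, hLv, hcase, hvj]
    rw [pos, offs, if_pos hvmin, hbig, hcase]
    omega
  · have hplt : lead π j < j := lt_of_le_of_ne (lead_le π j) hcase
    have hvne : v ≠ minOf (fMap π) v := by
      rw [minOf_fMap, hLv]
      intro h
      apply hcase
      apply π.injective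
      rw [hvj, ← h]
    rw [pos, offs, if_neg hvne, hbig]
    have hQ : ((blockOf (fMap π) v).filter fun y => v ≤ y)
        = univ.filter fun y => lead π (π.symm y) = lead π j ∧ v ≤ π (π.symm y) := by
      ext y
      rw [mem_filter, mem_filter, blockOf_fMap, mem_fib]
      simp only [mem_univ, true_and, Equiv.apply_symm_apply, Lv]
      rw [← hjdef]
    have hc := card_filter_symm π (fun i => lead π i = lead π j ∧ v ≤ π i)
    have hT : (univ.filter fun i => lead π i = lead π j ∧ v ≤ π i) = Finset.Ioc (lead π j) j := by
      ext i
      simp only [mem_filter, mem_univ, true_and, Finset.mem_Ioc]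
      constructor
      · rintro ⟨h1, h2⟩
        constructor
        · rcases lt_trichotomy (lead π j) i with hx | hx | hx
          · exact hx
          · exfalso
            rw [← hx] at h2
            have h3 : π (lead π j) ≤ v := by
              rw [← hvj]
              exact pi_lead_le π j
            have h4 : π (lead π j) = π j := by
              rw [hvj]
              exact le_antisymm h3 h2
            exact hcase (π.injective h4)
          · exfalso
            have := lead_le π i
            rw [h1] at this
            exact absurd hx (not_lt.mpr this)
        · by_contra hgt
          push_neg at hgt
          have hd := desc hav i j (by rw [h1]; exact hplt) hgt
          rw [hvj] at hd
          exact absurd h2 (not_le.mpr hd)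
      · rintro ⟨h1, h2⟩
        refine ⟨le_antisymm (lead_mono h2) (le_lead (isMin_lead π j) (le_of_lt h1)), ?_⟩
        rcases eq_or_lt_of_le h2 with heq | hlt2
        · rw [heq, hvj]
        · have hd := desc hav j i h1 hlt2
          rw [hvj] at hd
          exact le_of_lt hd
    rw [hQ, hc, hT, Fin.card_Ioc]
    have hle : (lead π j).1 ≤ j.1 := lead_le π j
    omega

lemma fMap_partition (π : Equiv.Perm (Fin n)) : IsSetPartition n (fMap π) := by
  refine ⟨?_, ?_, ?_⟩
  · intro A hA
    rw [fMap, mem_image] at hA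
    obtain ⟨v, -, rfl⟩ := hA
    exact ⟨v, mem_fib.mpr rfl⟩
  · intro A hA B hB hne
    rw [fMap, mem_image] at hA hB
    obtain ⟨v, -, rfl⟩ := hA
    obtain ⟨w, -, rfl⟩ := hB
    rw [Finset.disjoint_left]
    intro u hu hu'
    rw [mem_fib] at hu hu'
    apply hne
    ext y
    rw [mem_fib, mem_fib, ← hu, ← hu']
  · intro x
    refine ⟨fib π x, ?_, mem_fib.mpr rfl⟩
    rw [fMap, mem_image]
    exact ⟨x, mem_univ x, rfl⟩

lemma card_fMap (π : Equiv.Perm (Fin n)) : (fMap π).card = ltrMin n π := by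
  have himg : fMap π = (minSet π).image (fun p => univ.filter fun w => Lv π w = p) := by
    ext A
    simp only [fMap, mem_image, mem_univ, true_and]
    constructor
    · rintro ⟨v, rfl⟩
      refine ⟨Lv π v, ?_, ?_⟩
      · simp only [minSet, mem_filter, mem_univ, true_and]
        exact isMin_lead π _
      · rw [fib]
    · rintro ⟨p, hp, rfl⟩
      simp only [minSet, mem_filter, mem_univ, true_and] at hp
      refine ⟨π p, ?_⟩
      rw [fib]
      have : Lv π (π p) = p := by rw [Lv_pi, lead_of_isMin hp]
      rw [this]
  rw [himg, Finset.card_image_of_injOn, ltrMin]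
  · have hset : {i : Fin n | ∀ j, j < i → π i < π j} = ↑(minSet π) := by
      ext i
      simp only [minSet, Finset.coe_filter, Set.mem_setOf_eq, mem_univ, true_and]
      rfl
    rw [hset, Set.ncard_coe_finset]
  · intro p hp q hq h
    rw [Finset.mem_coe] at hp hq
    simp only [minSet, mem_filter, mem_univ, true_and] at hp hq
    have hmem : π p ∈ univ.filter fun w => Lv π w = p := by
      simp only [mem_filter, mem_univ, true_and]
      rw [Lv_pi, lead_of_isMin hp]
    simp only at h
    rw [h] at hmem
    simp only [mem_filter, mem_univ, true_and] at hmem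
    rw [Lv_pi, lead_of_isMin hp] at hmem
    exact hmem

end General

end AdBC

/-- The number of (a-bc)-avoiding permutations of `[n]` with exactly `k`
left-to-right minima is the Stirling number `S(n,k)`, the number of set
partitions of `[n]` into exactly `k` blocks. -/
theorem avoid_adbc_ltrmin_eq_stirling (n k : ℕ) :
    {π : Equiv.Perm (Fin n) | AvoidsAdBC n π ∧ ltrMin n π = k}.ncard =
      {P : Finset (Finset (Fin n)) | IsSetPartition n P ∧ P.card = k}.ncard := by
  classical
  have hinj : Set.InjOn AdBC.fMap {π : Equiv.Perm (Fin n) | AvoidsAdBC n π ∧ ltrMin n π = k} := by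
    intro π hπ σ hσ h
    have h2 : π.symm = σ.symm := by
      apply Equiv.ext
      intro v
      apply Fin.ext
      rw [← AdBC.pos_fMap hπ.1 v, ← AdBC.pos_fMap hσ.1 v, h]
    rw [← Equiv.symm_symm π, ← Equiv.symm_symm σ, h2]
  have himg : AdBC.fMap '' {π : Equiv.Perm (Fin n) | AvoidsAdBC n π ∧ ltrMin n π = k}
      = {P : Finset (Finset (Fin n)) | IsSetPartition n P ∧ P.card = k} := by
    ext P
    constructor
    · rintro ⟨π, ⟨hav, hk⟩, rfl⟩
      exact ⟨AdBC.fMap_partition π, by rw [AdBC.card_fMap]; exact hk⟩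
    · rintro ⟨hP, hk⟩
      refine ⟨AdBC.gp hP, ⟨AdBC.gp_avoids hP, ?_⟩, AdBC.fMap_gp hP⟩
      rw [← AdBC.card_fMap, AdBC.fMap_gp hP]
      exact hk
  rw [← himg, Set.ncard_image_of_injOn hinj]
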